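/- A final coalgebra is a completely iterative algebra: let F be an endofunctor on a category C with binary coproducts, and let (t, out) be a final F-coalgebra. Then the F-algebra (t, out⁻¹) is completely iterative: for every object x and every morphism e : x → F x + t, there is a unique h : x → t such that e · (F h + 1_t) · [out⁻¹, 1_t] = h. -/

import Mathlib

open CategoryTheory Category Limits

/-- A final coalgebra is a completely iterative algebra: let `F` be an endofunctor on a
category `C` with binary coproducts, and `(t, out)` a final `F`-coalgebra. Then `out` is
an isomorphism (Lambek), and for any inverse `α` of `out`, the `F`-algebra `(t, α)` is
completely iterative: every flat equation morphism `e : x ⟶ F x ⨿ t` has a unique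
solution `h : x ⟶ t`, i.e. `h = e ≫ (F h ⨿ 1_t) ≫ [α, 1_t]`. -/
theorem final_coalgebra_is_cia
    (C : Type*) [Category C] [HasBinaryCoproducts C]
    (F : C ⥤ C) (t : C) (out : t ⟶ F.obj t)
    -- `(t, out)` is a final coalgebra:
    (hfinal : ∀ (x : C) (c : x ⟶ F.obj x), ∃! h : x ⟶ t, c ≫ F.map h = h ≫ out) :
    -- `out` is an isomorphism ...
    (∃ α : F.obj t ⟶ t, out ≫ α = 𝟙 t ∧ α ≫ out = 𝟙 (F.obj t)) ∧
    -- ... and for any inverse `α` of `out`, `(t, α)` is a completely iterative algebra: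
    ∀ (α : F.obj t ⟶ t), out ≫ α = 𝟙 t → α ≫ out = 𝟙 (F.obj t) →
      ∀ (x : C) (e : x ⟶ F.obj x ⨿ t),
        ∃! h : x ⟶ t,
          h = e ≫ coprod.map (F.map h) (𝟙 t) ≫ coprod.desc α (𝟙 t) := by
  -- uniqueness helper: the identity is the unique coalgebra endomorphism of (t, out)
  have hid : ∀ g : t ⟶ t, out ≫ F.map g = g ≫ out → g = 𝟙 t := by
    intro g hg
    obtain ⟨u, -, huniq⟩ := hfinal t out
    have h1 := huniq g hg
    have h2 := huniq (𝟙 t) (by simp)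
    rw [h1, h2]
  constructor
  · -- Lambek
    obtain ⟨f, hf, -⟩ := hfinal (F.obj t) (F.map out)
    have hof : out ≫ f = 𝟙 t := by
      apply hid
      rw [F.map_comp, hf, assoc]
    refine ⟨f, hof, ?_⟩
    calc f ≫ out = F.map out ≫ F.map f := hf.symm
    _ = F.map (out ≫ f) := by rw [F.map_comp]
    _ = 𝟙 (F.obj t) := by rw [hof, F.map_id]
  · intro α hoα hαo x e
    -- coalgebra structure on x ⨿ t
    set c : (x ⨿ t) ⟶ F.obj (x ⨿ t) :=
      coprod.desc (e ≫ coprod.desc (F.map coprod.inl) (out ≫ F.map coprod.inr))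
        (out ≫ F.map coprod.inr) with hc
    obtain ⟨g, hg, hguniq⟩ := hfinal (x ⨿ t) c
    have hinl : coprod.inl ≫ c = e ≫ coprod.desc (F.map coprod.inl)
        (out ≫ F.map coprod.inr) := by rw [hc, coprod.inl_desc]
    have hinr : coprod.inr ≫ c = out ≫ F.map coprod.inr := by rw [hc, coprod.inr_desc]
    have hrg : coprod.inr ≫ g = 𝟙 t := by
      apply hid
      rw [F.map_comp, ← assoc, ← hinr, assoc, hg, ← assoc]
    have hho : (coprod.inl ≫ g) ≫ out
        = e ≫ coprod.desc (F.map (coprod.inl ≫ g)) out := by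
      rw [assoc, ← hg, ← assoc, hinl, assoc]
      congr 1
      apply coprod.hom_ext
      · rw [coprod.inl_desc_assoc, ← F.map_comp, coprod.inl_desc]
      · rw [coprod.inr_desc_assoc, assoc, ← F.map_comp, hrg, F.map_id, comp_id,
          coprod.inr_desc]
    refine ⟨coprod.inl ≫ g, ?_, ?_⟩
    · calc coprod.inl ≫ g = (coprod.inl ≫ g) ≫ out ≫ α := by rw [hoα, comp_id]
      _ = (e ≫ coprod.desc (F.map (coprod.inl ≫ g)) out) ≫ α := by
          rw [← assoc, hho]
      _ = e ≫ coprod.map (F.map (coprod.inl ≫ g)) (𝟙 t) ≫ coprod.desc α (𝟙 t) := by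
          rw [assoc]
          congr 1
          apply coprod.hom_ext <;> simp [hoα]
    · -- uniqueness
      intro h' hh'
      have hh'o : h' ≫ out = e ≫ coprod.desc (F.map h') out := by
        conv_lhs => rw [hh']
        simp only [assoc]
        congr 1
        apply coprod.hom_ext
        · simp [hαo]
        · rw [coprod.inr_map_assoc, id_comp, coprod.inr_desc_assoc, id_comp, coprod.inr_desc]
      have key : coprod.desc h' (𝟙 t) = g := by
        apply hguniq
        apply coprod.hom_ext
        · rw [← assoc, hinl, coprod.inl_desc_assoc, hh'o, assoc]
          congr 1
          apply coprod.hom_ext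
          · rw [coprod.inl_desc_assoc, ← F.map_comp, coprod.inl_desc,
              coprod.inl_desc]
          · rw [coprod.inr_desc_assoc, assoc, ← F.map_comp, coprod.inr_desc,
              F.map_id, comp_id, coprod.inr_desc]
        · rw [← assoc, hinr, assoc, ← F.map_comp]
          rw [coprod.inr_desc, F.map_id, comp_id, coprod.inr_desc_assoc, id_comp]
      calc h' = coprod.inl ≫ coprod.desc h' (𝟙 t) := by rw [coprod.inl_desc]
      _ = coprod.inl ≫ g := by rw [key]
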